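/- arXiv:0904.1481 — 5 statements merged into one kernel-verified Lean document; each statement's English description precedes it below -/
import Mathlib

section
/- Define, for a composition m=(m₁,…,m_n) of L, the signed sum g(m) = ∑ (-1)^{n-l} · L!/(i₁!⋯i_l!), where the sum runs over all compositions (i₁,…,i_l) obtained from m by successively merging adjacent parts. Then g satisfies the recursion g(m₁,m₂,…,m_n) = C(L,m₁)·g'(m₂,…,m_n) - g(m₁+m₂,m₃,…,m_n), where g' is the analogous function for compositions of L−m₁ and C(L,m₁) is the binomial coefficient. -/
/-- All coarsenings of a composition: the compositions obtained from it by
successively merging adjacent parts. -/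
def coarsenings : List ℕ → List (List ℕ)
  | [] => [[]]
  | [a] => [[a]]
  | a :: b :: t => ((coarsenings (b :: t)).map (a :: ·)) ++ coarsenings ((a + b) :: t)
termination_by m => m.length
decreasing_by all_goals simp

/-- The multinomial coefficient `L! / (i₁! ⋯ i_l!)`. -/
def mult (L : ℕ) (i : List ℕ) : ℤ :=
  ((Nat.factorial L / (i.map Nat.factorial).prod : ℕ) : ℤ)

/-- The signed coarsening sum
`g(m) = ∑ (-1)^(n-l) · L!/(i₁!⋯i_l!)` over all coarsenings `(i₁,…,i_l)` of `m`. -/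
def g (L : ℕ) (m : List ℕ) : ℤ :=
  ((coarsenings m).map (fun i => (-1 : ℤ) ^ (m.length - i.length) * mult L i)).sum

lemma coarsenings_sum : ∀ m : List ℕ, ∀ i ∈ coarsenings m, i.sum = m.sum ∧ i.length ≤ m.length := by
  intro m
  induction m using coarsenings.induct with
  | case1 => intro i hi; simp [coarsenings] at hi; simp [hi]
  | case2 a => intro i hi; simp [coarsenings] at hi; simp [hi]
  | case3 a b t ih1 ih2 =>
    intro i hi
    simp only [coarsenings, List.mem_append, List.mem_map] at hi
    rcases hi with ⟨j, hj, rfl⟩ | hi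
    · obtain ⟨h1, h2⟩ := ih1 j hj
      constructor <;> simp [h1, h2] at * <;> omega
    · obtain ⟨h1, h2⟩ := ih2 i hi
      constructor <;> simp at * <;> omega

lemma prod_factorial_dvd : ∀ i : List ℕ, (i.map Nat.factorial).prod ∣ i.sum.factorial := by
  intro i
  induction i with
  | nil => simp
  | cons a t ih =>
    simp only [List.map_cons, List.prod_cons, List.sum_cons]
    exact dvd_trans (mul_dvd_mul_left _ ih) (Nat.factorial_mul_factorial_dvd_factorial_add a t.sum)

lemma mult_cons (L m₁ : ℕ) (i : List ℕ) (hle : m₁ ≤ L) (hs : i.sum = L - m₁) :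
    mult L (m₁ :: i) = (L.choose m₁ : ℤ) * mult (L - m₁) i := by
  obtain ⟨q, hq⟩ : (i.map Nat.factorial).prod ∣ (L - m₁).factorial := hs ▸ prod_factorial_dvd i
  set P := (i.map Nat.factorial).prod with hP
  have hPpos : 0 < P := List.prod_pos (by simp; intro x _; exact Nat.factorial_pos x)
  have hfac : L.factorial = (m₁.factorial * P) * (L.choose m₁ * q) := by
    have := Nat.choose_mul_factorial_mul_factorial hle
    calc L.factorial = L.choose m₁ * m₁.factorial * (L - m₁).factorial := this.symm
    _ = L.choose m₁ * m₁.factorial * (P * q) := by rw [hq]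
    _ = (m₁.factorial * P) * (L.choose m₁ * q) := by ring
  have h1 : L.factorial / (m₁.factorial * P) = L.choose m₁ * q := by
    rw [hfac, Nat.mul_div_cancel_left _ (by positivity)]
  have h2 : (L - m₁).factorial / P = q := by rw [hq, Nat.mul_div_cancel_left _ hPpos]
  simp only [mult, List.map_cons, List.prod_cons, ← hP, h1, h2]
  push_cast; ring

/-- The recursion `g(m₁,m₂,…,m_n) = C(L,m₁)·g'(m₂,…,m_n) − g(m₁+m₂,m₃,…,m_n)`,
where `g'` is the analogous signed coarsening sum for compositions of `L − m₁`. -/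
theorem g_recursion (L m₁ m₂ : ℕ) (rest : List ℕ)
    (h₁ : 1 ≤ m₁) (h₂ : 1 ≤ m₂) (hrest : ∀ x ∈ rest, 1 ≤ x)
    (hsum : m₁ + m₂ + rest.sum = L) :
    g L (m₁ :: m₂ :: rest) =
      (L.choose m₁ : ℤ) * g (L - m₁) (m₂ :: rest) - g L ((m₁ + m₂) :: rest) := by
  have hle : m₁ ≤ L := by omega
  rw [show g L (m₁ :: m₂ :: rest) =
      ((coarsenings (m₂ :: rest)).map (fun i =>
        (-1 : ℤ) ^ ((m₁ :: m₂ :: rest).length - (m₁ :: i).length) * mult L (m₁ :: i))).sum +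
      ((coarsenings ((m₁ + m₂) :: rest)).map (fun i =>
        (-1 : ℤ) ^ ((m₁ :: m₂ :: rest).length - i.length) * mult L i)).sum by
    simp [g, coarsenings, List.map_append, List.map_map, Function.comp_def]]
  have e1 : ((coarsenings (m₂ :: rest)).map (fun i =>
      (-1 : ℤ) ^ ((m₁ :: m₂ :: rest).length - (m₁ :: i).length) * mult L (m₁ :: i))).sum
      = (L.choose m₁ : ℤ) * g (L - m₁) (m₂ :: rest) := by
    rw [g, ← List.sum_map_mul_left]
    congr 1
    apply List.map_congr_left
    intro i hi
    obtain ⟨hs, hl⟩ := coarsenings_sum _ i hi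
    simp only [List.sum_cons] at hs
    rw [mult_cons L m₁ i hle (by omega)]
    simp only [List.length_cons]
    rw [show rest.length + 1 + 1 - (i.length + 1) = rest.length + 1 - i.length by omega]
    ring
  have e2 : ((coarsenings ((m₁ + m₂) :: rest)).map (fun i =>
      (-1 : ℤ) ^ ((m₁ :: m₂ :: rest).length - i.length) * mult L i)).sum
      = - g L ((m₁ + m₂) :: rest) := by
    rw [g]
    have key : ∀ l : List (List ℕ), (∀ i ∈ l, i.length ≤ rest.length + 1) →
        (l.map (fun i => (-1 : ℤ) ^ ((m₁ :: m₂ :: rest).length - i.length) * mult L i)).sum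
        = - (l.map (fun i =>
            (-1 : ℤ) ^ (((m₁ + m₂) :: rest).length - i.length) * mult L i)).sum := by
      intro l
      induction l with
      | nil => simp
      | cons a t ih =>
        intro h
        simp only [List.map_cons, List.sum_cons, ih (fun i hi => h i (by simp [hi]))]
        have ha := h a (by simp)
        simp only [List.length_cons]
        rw [show rest.length + 1 + 1 - a.length = (rest.length + 1 - a.length) + 1 by omega]
        ring
    exact key _ (fun i hi => by simpa using (coarsenings_sum _ i hi).2)
  rw [e1, e2]
  ring
end

section
/- Intertwining property of the species-merging map: let s ⊆ t be subsets of {1,…,L−1} labeling sectors, and let φ_{s,t} be the linear map from V_t to V_s which relabels local states by the monotone merging map determined by s ⊆ t. Then φ_{s,t} ∘ H_t = H_s ∘ φ_{s,t}, where H_s, H_t are the restrictions of the multi-species ASEP Hamiltonian to the respective sectors. -/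
/-- The hopping rate `Θ(x) = p` for `x > 0`, `0` for `x = 0`, `q` for `x < 0`. -/
noncomputable def theta (p q : ℝ) (x : ℤ) : ℝ := if 0 < x then p else if x < 0 then q else 0

/-- Cyclic successor on `Fin L`. -/
def cycSucc {L : ℕ} (i : Fin L) : Fin L := ⟨((i : ℕ) + 1) % L, Nat.mod_lt _ i.pos⟩

/-- The configuration obtained from `k` by interchanging the local states at
sites `i` and `i+1` (cyclically). -/
def swapAt {L N : ℕ} (k : Fin L → Fin N) (i : Fin L) : Fin L → Fin N :=
  fun j => if j = i then k (cycSucc i) else if j = cycSucc i then k i else k j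

/-- The species of the `u`-th letter (`1 ≤ u ≤ L`) of the nondecreasing word
`1^{s₁} 2^{s₂−s₁} ⋯ n^{L−s_{n−1}}` determined by the sector `s = {s₁<…<s_{n−1}}`. -/
def spc (s : Finset ℕ) (u : ℕ) : ℕ := 1 + (s.filter (· < u)).card

/-- A configuration lies in the sector labeled by `s ⊆ {1,…,L−1}` iff it is a
permutation of the word `1^{s₁} 2^{s₂−s₁} ⋯ n^{L−s_{n−1}}`. -/
def inSector (L : ℕ) (s : Finset ℕ) (k : Fin L → Fin (L + 1)) : Prop :=
  Multiset.map (fun j => (k j : ℕ)) Finset.univ.val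
    = Multiset.map (spc s) (Finset.Icc 1 L).val

instance (L : ℕ) (s : Finset ℕ) : DecidablePred (inSector L s) :=
  fun _ => inferInstanceAs (Decidable (_ = _))

/-- The set of basis configurations of the sector `V_s`. -/
abbrev Sector (L : ℕ) (s : Finset ℕ) := {k : Fin L → Fin (L + 1) // inSector L s k}

/-- The monotone merging map on species labels determined by `s ⊆ t`: if
`s = t \ {t_{i₁},…,t_{i_l}}` then `x ↦ x − #{j : i_j < x}`. -/
def mrg (s t : Finset ℕ) (x : ℕ) : ℕ :=
  x - ((t \ s).filter (fun e => (t.filter (· ≤ e)).card < x)).card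

/-- The species-merging map `φ_{s,t} : V_t → V_s` as a matrix. -/
noncomputable def PhiMat (L : ℕ) (s t : Finset ℕ) : Matrix (Sector L s) (Sector L t) ℝ :=
  fun c k => if (fun j => (c.1 j : ℕ)) = (fun j => mrg s t (k.1 j)) then 1 else 0

/-- The multi-species ASEP Hamiltonian restricted to the sector `V_s`:
`H|k⟩ = ∑_i Θ(k_i−k_{i+1}) (|k^{(i)}⟩ − |k⟩)` cyclically. -/
noncomputable def HSec (p q : ℝ) (L : ℕ) (s : Finset ℕ) :
    Matrix (Sector L s) (Sector L s) ℝ :=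
  fun c k => ∑ i : Fin L, theta p q ((k.1 i : ℤ) - (k.1 (cycSucc i) : ℤ)) *
    ((if c.1 = swapAt k.1 i then 1 else 0) - (if c.1 = k.1 then 1 else 0))

namespace MrgAux

lemma cnt_lt (t : Finset ℕ) {e1 e2 : ℕ} (h2 : e2 ∈ t) (h : e1 < e2) :
    (t.filter (· ≤ e1)).card < (t.filter (· ≤ e2)).card := by
  apply Finset.card_lt_card
  constructor
  · exact Finset.monotone_filter_right _ (fun x _ hx => le_trans hx h.le)
  · intro hsub
    have := hsub (Finset.mem_filter.mpr ⟨h2, le_refl e2⟩)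
    simp only [Finset.mem_filter] at this
    omega

lemma cnt_injOn (t : Finset ℕ) {A : Finset ℕ} (hA : A ⊆ t) :
    Set.InjOn (fun e => (t.filter (· ≤ e)).card) A := by
  intro e1 h1 e2 h2 heq
  by_contra hne
  rcases lt_or_gt_of_ne hne with h | h
  · exact absurd heq (Nat.ne_of_lt (cnt_lt t (hA h2) h))
  · exact absurd heq.symm (Nat.ne_of_lt (cnt_lt t (hA h1) h))

lemma mrg_mono (s t : Finset ℕ) : Monotone (mrg s t) := by
  intro x y hxy
  unfold mrg
  set c := fun e => (t.filter (· ≤ e)).card with hc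
  set Dx := (t \ s).filter (fun e => c e < x) with hDx
  set Dy := (t \ s).filter (fun e => c e < y) with hDy
  have hsub : Dx ⊆ Dy := Finset.monotone_filter_right _ (fun e _ he => lt_of_lt_of_le he hxy)
  have hcard : (Dy \ Dx).card + Dx.card = Dy.card := Finset.card_sdiff_add_card_eq_card hsub
  have hbound : (Dy \ Dx).card ≤ y - x := by
    have := Finset.card_le_card_of_injOn
      (f := c) (s := Dy \ Dx) (t := Finset.Ico x y) ?_ ?_
    · simpa using this
    · intro e he
      simp only [Finset.mem_coe, Finset.mem_sdiff, hDy, hDx, Finset.mem_filter] at he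
      have h1 : c e < y := he.1.2
      have h2 : ¬ c e < x := fun hh => he.2 ⟨he.1.1, hh⟩
      simp only [Finset.mem_coe, Finset.mem_Ico]; omega
    · exact (cnt_injOn t (Finset.sdiff_subset)).mono
        (fun e he => by
          have : e ∈ Dy := (Finset.sdiff_subset) he
          simp only [hDy, Finset.mem_filter] at this
          exact this.1)
  omega

lemma mrg_le (s t : Finset ℕ) (x : ℕ) : mrg s t x ≤ x := Nat.sub_le _ _

lemma mrg_spc {s t : Finset ℕ} (hst : s ⊆ t) (u : ℕ) :
    mrg s t (spc t u) = spc s u := by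
  unfold mrg spc
  have hfilter : ((t \ s).filter (fun e => (t.filter (· ≤ e)).card < 1 + (t.filter (· < u)).card))
      = (t \ s).filter (· < u) := by
    apply Finset.filter_congr
    intro e he
    have het : e ∈ t := Finset.sdiff_subset he
    constructor
    · intro h
      by_contra hlt
      push_neg at hlt
      have hssub : (t.filter (· < u)) ⊂ (t.filter (· ≤ e)) := by
        constructor
        · exact Finset.monotone_filter_right _ (fun x _ hx => le_trans (le_of_lt hx) hlt)
        · intro hsub
          have := hsub (Finset.mem_filter.mpr ⟨het, le_refl e⟩)
          simp only [Finset.mem_filter] at this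
          omega
      have := Finset.card_lt_card hssub
      omega
    · intro h
      have hsub : (t.filter (· ≤ e)) ⊆ (t.filter (· < u)) :=
        Finset.monotone_filter_right _ (fun x _ hx => lt_of_le_of_lt hx h)
      have := Finset.card_le_card hsub
      omega
  rw [hfilter]
  have hunion : s.filter (· < u) ∪ (t \ s).filter (· < u) = t.filter (· < u) := by
    rw [← Finset.filter_union, Finset.union_sdiff_of_subset hst]
  have hdisj : Disjoint (s.filter (· < u)) ((t \ s).filter (· < u)) :=
    Finset.disjoint_filter_filter Finset.disjoint_sdiff
  have hcard : (s.filter (· < u)).card + ((t \ s).filter (· < u)).card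
      = (t.filter (· < u)).card := by
    rw [← Finset.card_union_of_disjoint hdisj, hunion]
  omega



lemma swapAt_eq_comp {L N : ℕ} (k : Fin L → Fin N) (i : Fin L) :
    swapAt k i = fun j => k (Equiv.swap i (cycSucc i) j) := by
  funext j
  simp only [swapAt, Equiv.swap_apply_def]
  split_ifs <;> rfl

lemma inSector_swapAt {L : ℕ} {t : Finset ℕ} {k : Fin L → Fin (L + 1)}
    (hk : inSector L t k) (i : Fin L) : inSector L t (swapAt k i) := by
  unfold inSector at *
  rw [swapAt_eq_comp]
  have huniv : Multiset.map (⇑(Equiv.swap i (cycSucc i))) Finset.univ.val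
      = Finset.univ.val := by
    have := congrArg Finset.val (Finset.map_univ_equiv (Equiv.swap i (cycSucc i)))
    simpa [Finset.map] using this
  calc Multiset.map (fun j => ((k ((Equiv.swap i (cycSucc i)) j) : ℕ))) Finset.univ.val
      = Multiset.map (fun j => ((k j : ℕ)))
          (Multiset.map (⇑(Equiv.swap i (cycSucc i))) Finset.univ.val) := by
        rw [Multiset.map_map]; rfl
    _ = _ := by rw [huniv, hk]

lemma sum_delta {α β : Type*} [Fintype α] [DecidableEq β] {P : α → Prop} [DecidablePred P]
    (ψ : α → β) (hψ : Function.Injective ψ) (f : α → ℝ) (g : α) (hg : P g) :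
    ∑ x : {a // P a}, f x.1 * (if ψ x.1 = ψ g then 1 else 0) = f g := by
  rw [Finset.sum_eq_single (⟨g, hg⟩ : {a // P a})]
  · simp
  · intro b _ hb
    have : ψ b.1 ≠ ψ g := fun h => hb (Subtype.ext (hψ h))
    simp [this]
  · intro h; exact absurd (Finset.mem_univ _) h

lemma sum_delta' {α : Type*} [Fintype α] [DecidableEq α] {P : α → Prop} [DecidablePred P]
    (f : α → ℝ) (g : α) (hg : P g) :
    ∑ x : {a // P a}, f x.1 * (if x.1 = g then 1 else 0) = f g := by
  rw [Finset.sum_eq_single (⟨g, hg⟩ : {a // P a})]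
  · simp
  · intro b _ hb
    have : b.1 ≠ g := fun h => hb (Subtype.ext h)
    simp [this]
  · intro h; exact absurd (Finset.mem_univ _) h

end MrgAux

open MrgAux in
/-- Intertwining property of the species-merging map:
`φ_{s,t} ∘ H_t = H_s ∘ φ_{s,t}` for sectors `s ⊆ t ⊆ {1,…,L−1}`. -/
theorem merging_intertwines_Hamiltonian (p q : ℝ) (L : ℕ) (s t : Finset ℕ)
    (hst : s ⊆ t) (ht : t ⊆ Finset.Ioo 0 L) :
    PhiMat L s t * HSec p q L t = HSec p q L s * PhiMat L s t := by
  classical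
  ext c k
  -- the merged configuration c₀
  have hkL : ∀ j, mrg s t (k.1 j) < L + 1 :=
    fun j => lt_of_le_of_lt (Nat.sub_le _ _) (k.1 j).isLt
  set c₀ : Fin L → Fin (L + 1) := fun j => ⟨mrg s t (k.1 j), hkL j⟩ with hc₀def
  have hc₀coe : (fun j => ((c₀ j : ℕ))) = fun j => mrg s t (k.1 j) := rfl
  have hc₀sec : inSector L s c₀ := by
    unfold inSector
    calc Multiset.map (fun j => (c₀ j : ℕ)) Finset.univ.val
        = Multiset.map (mrg s t) (Multiset.map (fun j => (k.1 j : ℕ)) Finset.univ.val) := by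
          rw [Multiset.map_map]; rfl
      _ = Multiset.map (mrg s t) (Multiset.map (spc t) (Finset.Icc 1 L).val) := by rw [k.2]
      _ = Multiset.map (fun u => mrg s t (spc t u)) (Finset.Icc 1 L).val := by
          rw [Multiset.map_map]; rfl
      _ = Multiset.map (spc s) (Finset.Icc 1 L).val := by
          exact Multiset.map_congr rfl (fun u _ => mrg_spc hst u)
  -- coercion map and its injectivity
  set Ψ : (Fin L → Fin (L + 1)) → (Fin L → ℕ) := fun g j => (g j : ℕ) with hΨdef
  have hΨinj : Function.Injective Ψ :=
    fun a b h => funext fun j => Fin.ext (congrFun h j)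
  -- mrg of swapped config
  have hswapcoe : ∀ i : Fin L,
      (fun j => mrg s t (swapAt k.1 i j)) = Ψ (swapAt c₀ i) := by
    intro i
    funext j
    simp only [swapAt, hΨdef]
    split_ifs <;> rfl
  simp only [Matrix.mul_apply, HSec, PhiMat]
  -- RHS: collapse the sum over c'
  rw [sum_delta (P := inSector L s) Ψ hΨinj
    (fun g => ∑ i : Fin L, theta p q ((g i : ℤ) - (g (cycSucc i) : ℤ)) *
      ((if c.1 = swapAt g i then 1 else 0) - (if c.1 = g then 1 else 0))) c₀ hc₀sec]
  -- LHS: push Φ inside and swap sums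
  simp only [Finset.mul_sum]
  rw [Finset.sum_comm]
  apply Finset.sum_congr rfl
  intro i _
  -- collapse the sum over k' for this i
  have hrearr : ∀ x : Sector L t,
      (if (fun j => ((c.1 j : ℕ))) = (fun j => mrg s t (x.1 j)) then (1:ℝ) else 0) *
        (theta p q ((k.1 i : ℤ) - (k.1 (cycSucc i) : ℤ)) *
          ((if x.1 = swapAt k.1 i then (1:ℝ) else 0) - (if x.1 = k.1 then (1:ℝ) else 0)))
      = theta p q ((k.1 i : ℤ) - (k.1 (cycSucc i) : ℤ)) *
          ((if (fun j => ((c.1 j : ℕ))) = (fun j => mrg s t (x.1 j)) then (1:ℝ) else 0) *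
            (if x.1 = swapAt k.1 i then (1:ℝ) else 0))
        - theta p q ((k.1 i : ℤ) - (k.1 (cycSucc i) : ℤ)) *
          ((if (fun j => ((c.1 j : ℕ))) = (fun j => mrg s t (x.1 j)) then (1:ℝ) else 0) *
            (if x.1 = k.1 then (1:ℝ) else 0)) := fun x => by ring
  rw [Finset.sum_congr rfl (fun x _ => hrearr x), Finset.sum_sub_distrib,
    ← Finset.mul_sum, ← Finset.mul_sum]
  rw [sum_delta' (P := inSector L t)
    (fun g => if (fun j => ((c.1 j : ℕ))) = (fun j => mrg s t (g j)) then (1:ℝ) else 0)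
    (swapAt k.1 i) (inSector_swapAt k.2 i)]
  rw [sum_delta' (P := inSector L t)
    (fun g => if (fun j => ((c.1 j : ℕ))) = (fun j => mrg s t (g j)) then (1:ℝ) else 0)
    k.1 k.2]
  -- identify the indicator conditions
  have hcondA : ((fun j => ((c.1 j : ℕ))) = (fun j => mrg s t (swapAt k.1 i j)))
      ↔ (c.1 = swapAt c₀ i) := by
    rw [hswapcoe i]
    exact ⟨fun h => hΨinj h, fun h => congrArg Ψ h⟩
  have hcondB : ((fun j => ((c.1 j : ℕ))) = (fun j => mrg s t (k.1 j)))
      ↔ (c.1 = c₀) := ⟨fun h => hΨinj h, fun h => congrArg Ψ h⟩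
  rw [if_congr hcondA rfl rfl, if_congr hcondB rfl rfl]
  -- now a scalar identity; case analysis on the local values
  have hvi : ((c₀ i : ℤ)) = ((mrg s t (k.1 i) : ℕ) : ℤ) := rfl
  have hvs : ((c₀ (cycSucc i) : ℤ)) = ((mrg s t (k.1 (cycSucc i)) : ℕ) : ℤ) := rfl
  rcases lt_trichotomy ((k.1 i : ℕ)) ((k.1 (cycSucc i) : ℕ)) with h | h | h
  · rcases eq_or_lt_of_le (mrg_mono s t h.le) with heq | hlt
    · have hcc : c₀ i = c₀ (cycSucc i) := Fin.ext heq
      have hsw : swapAt c₀ i = c₀ := by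
        funext j
        simp only [swapAt]
        split_ifs with h1 h2
        · rw [h1]; exact hcc.symm
        · rw [h2]; exact hcc
        · rfl
      rw [hsw]
      ring
    · have h1 : theta p q ((k.1 i : ℤ) - (k.1 (cycSucc i) : ℤ)) = q := by
        unfold theta
        rw [if_neg (by omega), if_pos (by omega)]
      have h2 : theta p q ((c₀ i : ℤ) - (c₀ (cycSucc i) : ℤ)) = q := by
        unfold theta
        rw [hvi, hvs, if_neg (by omega), if_pos (by omega)]
      rw [h1, h2]; ring
  · have heq : mrg s t ((k.1 i : ℕ)) = mrg s t ((k.1 (cycSucc i) : ℕ)) := by rw [h]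
    have h1 : theta p q ((k.1 i : ℤ) - (k.1 (cycSucc i) : ℤ)) = 0 := by
      unfold theta
      rw [if_neg (by omega), if_neg (by omega)]
    have h2 : theta p q ((c₀ i : ℤ) - (c₀ (cycSucc i) : ℤ)) = 0 := by
      unfold theta
      rw [hvi, hvs, if_neg (by omega), if_neg (by omega)]
    rw [h1, h2]; ring
  · rcases eq_or_lt_of_le (mrg_mono s t h.le) with heq | hlt
    · have hcc : c₀ i = c₀ (cycSucc i) := Fin.ext heq.symm
      have hsw : swapAt c₀ i = c₀ := by
        funext j
        simp only [swapAt]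
        split_ifs with h1 h2
        · rw [h1]; exact hcc.symm
        · rw [h2]; exact hcc
        · rfl
      rw [hsw]
      ring
    · have h1 : theta p q ((k.1 i : ℤ) - (k.1 (cycSucc i) : ℤ)) = p := by
        unfold theta
        rw [if_pos (by omega)]
      have h2 : theta p q ((c₀ i : ℤ) - (c₀ (cycSucc i) : ℤ)) = p := by
        unfold theta
        rw [hvi, hvs, if_pos (by omega)]
      rw [h1, h2]; ring
end

section
/- Factorization and path-independence of merging maps: for sectors s ⊂ t ⊆ {1,…,L−1} with |t| = |s| + l, and any chain s = s₀ ⊂ s₁ ⊂ … ⊂ s_l = t with |s_{j+1}| = |s_j| + 1, one has φ_{s,t} = φ_{s,s₁} ∘ φ_{s₁,s₂} ∘ … ∘ φ_{s_{l−1},t}. In particular the composite is independent of the choice of intermediate sectors. -/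
namespace MergingAux

def rnk (u : Finset ℕ) (e : ℕ) : ℕ := (u.filter (· ≤ e)).card

lemma filter_le_mono (u : Finset ℕ) {a b : ℕ} (h : a ≤ b) :
    u.filter (· ≤ a) ⊆ u.filter (· ≤ b) := by
  intro y hy
  rw [Finset.mem_filter] at hy ⊢
  exact ⟨hy.1, hy.2.trans h⟩

lemma rnk_mono (u : Finset ℕ) {a b : ℕ} (h : a ≤ b) : rnk u a ≤ rnk u b :=
  Finset.card_le_card (filter_le_mono u h)

lemma one_le_rnk (u : Finset ℕ) {e : ℕ} (he : e ∈ u) : 1 ≤ rnk u e :=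
  Finset.card_pos.mpr ⟨e, Finset.mem_filter.mpr ⟨he, le_refl e⟩⟩

lemma rnk_le_card (u : Finset ℕ) (e : ℕ) : rnk u e ≤ u.card :=
  Finset.card_le_card (Finset.filter_subset _ _)

lemma rnk_strict (u : Finset ℕ) {a b : ℕ} (hb : b ∈ u) (h : a < b) :
    rnk u a < rnk u b := by
  apply Finset.card_lt_card
  rw [Finset.ssubset_iff_of_subset (filter_le_mono u h.le)]
  exact ⟨b, Finset.mem_filter.mpr ⟨hb, le_refl b⟩, fun hb' => by
    have := (Finset.mem_filter.mp hb').2; omega⟩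

lemma rnk_injOn (u : Finset ℕ) : Set.InjOn (rnk u) u := by
  intro a ha b hb hab
  by_contra hne
  rcases Nat.lt_or_ge a b with h | h
  · exact absurd hab (Nat.ne_of_lt (rnk_strict u hb h))
  · exact absurd hab.symm (Nat.ne_of_lt (rnk_strict u ha (lt_of_le_of_ne h (Ne.symm hne))))

lemma rnk_low_card (u : Finset ℕ) (x : ℕ) :
    (u.filter (fun y => rnk u y < x)).card ≤ x - 1 := by
  have h1 : ∀ y ∈ u.filter (fun y => rnk u y < x), rnk u y ∈ Finset.Ico 1 x := by
    intro y hy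
    rw [Finset.mem_filter] at hy
    exact Finset.mem_Ico.mpr ⟨one_le_rnk u hy.1, hy.2⟩
  have h2 : Set.InjOn (rnk u) (u.filter (fun y => rnk u y < x)) :=
    (rnk_injOn u).mono (by intro y hy; exact (Finset.filter_subset _ _) hy)
  calc (u.filter (fun y => rnk u y < x)).card
      ≤ (Finset.Ico 1 x).card := Finset.card_le_card_of_injOn (rnk u) h1 h2
    _ = x - 1 := by simp

lemma rnk_high_card (u : Finset ℕ) (x : ℕ) :
    (u.filter (fun y => x ≤ rnk u y)).card ≤ u.card + 1 - x := by
  have h1 : ∀ y ∈ u.filter (fun y => x ≤ rnk u y), rnk u y ∈ Finset.Icc x u.card := by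
    intro y hy
    rw [Finset.mem_filter] at hy
    exact Finset.mem_Icc.mpr ⟨hy.2, rnk_le_card u y⟩
  have h2 : Set.InjOn (rnk u) (u.filter (fun y => x ≤ rnk u y)) :=
    (rnk_injOn u).mono (by intro y hy; exact (Finset.filter_subset _ _) hy)
  calc (u.filter (fun y => x ≤ rnk u y)).card
      ≤ (Finset.Icc x u.card).card := Finset.card_le_card_of_injOn (rnk u) h1 h2
    _ = u.card + 1 - x := by simp

lemma rnk_low_card_ge (u : Finset ℕ) (x : ℕ) (hx : x ≤ u.card + 1) :
    x - 1 ≤ (u.filter (fun y => rnk u y < x)).card := by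
  have h1 := rnk_high_card u x
  have h2 := Finset.card_filter_add_card_filter_not (s := u) (p := fun y => rnk u y < x)
  simp only [not_lt] at h2
  omega

lemma rnk_key (t u : Finset ℕ) (htu : t ⊆ u) (x : ℕ) {e : ℕ} (he : e ∈ t) :
    (rnk u e < x ↔ rnk t e + ((u \ t).filter (fun y => rnk u y < x)).card < x) := by
  set a := ((u \ t).filter (fun y => rnk u y < x)).card with ha
  have hdisj : Disjoint (t.filter (fun y => rnk u y < x))
      ((u \ t).filter (fun y => rnk u y < x)) := by
    apply Finset.disjoint_filter_filter
    exact Finset.disjoint_sdiff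
  have hsumS : (t.filter (fun y => rnk u y < x)).card + a
      = (u.filter (fun y => rnk u y < x)).card := by
    rw [← Finset.card_union_of_disjoint hdisj, ← Finset.filter_union,
      Finset.union_sdiff_of_subset htu]
  have fwd : rnk u e < x → rnk t e + a < x := by
    intro h
    have hx1 : 1 ≤ x := lt_of_le_of_lt (Nat.zero_le _) (lt_of_le_of_lt (Nat.zero_le _) h)
    have hsub1 : t.filter (· ≤ e) ⊆ t.filter (fun y => rnk u y < x) := by
      intro y hy
      rw [Finset.mem_filter] at hy ⊢
      exact ⟨hy.1, lt_of_le_of_lt (rnk_mono u hy.2) h⟩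
    have h1 : rnk t e ≤ (t.filter (fun y => rnk u y < x)).card :=
      Finset.card_le_card hsub1
    have h3 := rnk_low_card u x
    have he1 := one_le_rnk u (htu he)
    omega
  have bwd : x ≤ rnk u e → x ≤ rnk t e + a := by
    intro h
    have hxu : x ≤ u.card := le_trans h (rnk_le_card u e)
    have hS := rnk_low_card_ge u x (by omega)
    have hins : insert e (t.filter (fun y => rnk u y < x)) ⊆ t.filter (· ≤ e) := by
      intro y hy
      rw [Finset.mem_insert] at hy
      rcases hy with rfl | hy
      · exact Finset.mem_filter.mpr ⟨he, le_refl y⟩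
      · rw [Finset.mem_filter] at hy ⊢
        refine ⟨hy.1, ?_⟩
        by_contra hle
        have : e ≤ y := by omega
        have := rnk_mono u this
        omega
    have hnot : e ∉ t.filter (fun y => rnk u y < x) := by
      rw [Finset.mem_filter]; omega
    have hcard : (t.filter (fun y => rnk u y < x)).card + 1 ≤ rnk t e := by
      have := Finset.card_le_card hins
      rwa [Finset.card_insert_of_notMem hnot] at this
    omega
  constructor
  · exact fwd
  · intro h; by_contra hcon; have := bwd (by omega); omega

lemma mrg_trans {s t u : Finset ℕ} (hst : s ⊆ t) (htu : t ⊆ u) (x : ℕ) :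
    mrg s u x = mrg s t (mrg t u x) := by
  show x - ((u \ s).filter (fun e => rnk u e < x)).card
    = mrg t u x - ((t \ s).filter (fun e => rnk t e < mrg t u x)).card
  have hmtu : mrg t u x = x - ((u \ t).filter (fun e => rnk u e < x)).card := rfl
  set a := ((u \ t).filter (fun e => rnk u e < x)).card with ha
  have hsd : u \ s = (u \ t) ∪ (t \ s) := by
    ext y
    simp only [Finset.mem_sdiff, Finset.mem_union]
    have h1 := @hst y
    have h2 := @htu y
    tauto
  have hdisj : Disjoint ((u \ t).filter (fun e => rnk u e < x))
      ((t \ s).filter (fun e => rnk u e < x)) := by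
    apply Finset.disjoint_filter_filter
    rw [Finset.disjoint_left]
    intro y hy hy'
    exact (Finset.mem_sdiff.mp hy).2 ((Finset.mem_sdiff.mp hy').1)
  have hsplit : ((u \ s).filter (fun e => rnk u e < x)).card
      = a + ((t \ s).filter (fun e => rnk u e < x)).card := by
    rw [hsd, Finset.filter_union, Finset.card_union_of_disjoint hdisj]
  have hcong : (t \ s).filter (fun e => rnk u e < x)
      = (t \ s).filter (fun e => rnk t e < x - a) := by
    apply Finset.filter_congr
    intro e he'
    have het : e ∈ t := (Finset.mem_sdiff.mp he').1
    have hk := rnk_key t u htu x het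
    rw [← ha] at hk
    omega
  rw [hsplit, hmtu, ← hcong]
  omega

lemma chain_subset {l : ℕ} (c : ℕ → Finset ℕ) (hchain : ∀ j < l, c j ⊆ c (j + 1))
    {i j : ℕ} (hij : i ≤ j) (hj : j ≤ l) : c i ⊆ c j := by
  induction j with
  | zero => simpa [Nat.le_zero.mp hij] using Finset.Subset.refl _
  | succ n ih =>
    rcases Nat.lt_or_ge i (n + 1) with h | h
    · exact (ih (by omega) (by omega)).trans (hchain n (by omega))
    · have : i = n + 1 := by omega
      subst this; exact Finset.Subset.refl _

end MergingAux

/-- Factorization and path-independence of merging maps: for any saturated chain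
`s = c 0 ⊂ c 1 ⊂ … ⊂ c l = t` of sectors (each step adding one element), the
merging map `φ_{s,t}` equals the composite `φ_{c 0,c 1} ∘ … ∘ φ_{c (l−1),c l}`
of the one-step merging maps, on all species labels `1 ≤ x ≤ |t| + 1`. -/
theorem merging_factorization_path_independent (L l : ℕ) (c : ℕ → Finset ℕ)
    (hIoo : ∀ j ≤ l, c j ⊆ Finset.Ioo 0 L)
    (hchain : ∀ j < l, c j ⊆ c (j + 1))
    (hcard : ∀ j < l, (c (j + 1)).card = (c j).card + 1)
    (x : ℕ) (hx1 : 1 ≤ x) (hx2 : x ≤ (c l).card + 1) :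
    mrg (c 0) (c l) x
      = (List.range l).foldr (fun j y => mrg (c j) (c (j + 1)) y) x := by
  open MergingAux in
  induction l generalizing c with
  | zero => simp [mrg]
  | succ n ih =>
    rw [List.range_succ_eq_map, List.foldr_cons, List.foldr_map]
    have h01 : c 0 ⊆ c 1 := hchain 0 (by omega)
    have h1l : c 1 ⊆ c (n + 1) := chain_subset c hchain (by omega) (le_refl _)
    rw [mrg_trans h01 h1l x]
    congr 1
    exact ih (fun j => c (j + 1)) (fun j hj => hIoo (j + 1) (by omega))
      (fun j hj => hchain (j + 1) (by omega)) (fun j hj => hcard (j + 1) (by omega))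
      hx2
end

section
/- Spectral inclusion: for sectors s ⊂ t ⊆ {1,…,L−1}, every eigenvalue of H_s (with its multiplicity in the characteristic polynomial) is an eigenvalue of H_t; equivalently, the characteristic polynomial of H_s divides that of H_t. -/
lemma exists_map_eq {α β γ : Type*} [DecidableEq α] [DecidableEq β] [DecidableEq γ] [Nonempty β]
    (A : Finset α) (B : Finset β) (f : α → γ) (g : β → γ)
    (h : A.val.map f = B.val.map g) :
    ∃ e : α → β, A.val.map e = B.val ∧ ∀ a ∈ A, f a = g (e a) := by
  induction A using Finset.cons_induction generalizing B with
  | empty =>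
    refine ⟨fun _ => Classical.arbitrary β, ?_, by simp⟩
    simp only [Finset.empty_val, Multiset.map_zero] at h ⊢
    have : B.val.card = 0 := by
      have := congrArg Multiset.card h; simpa using this.symm
    simp [Multiset.card_eq_zero.mp this]
  | cons a A' ha ih =>
    rw [Finset.cons_val, Multiset.map_cons] at h
    have hfa : f a ∈ B.val.map g := by rw [← h]; exact Multiset.mem_cons_self _ _
    obtain ⟨b, hb, hgb⟩ := Multiset.mem_map.mp hfa
    have hb' : b ∈ B := hb
    have hBv : B.val = b ::ₘ (B.erase b).val := by
      rw [Finset.erase_val]; exact (Multiset.cons_erase hb).symm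
    have h' : A'.val.map f = (B.erase b).val.map g := by
      have : f a ::ₘ A'.val.map f = f a ::ₘ (B.erase b).val.map g := by
        rw [h, hBv, Multiset.map_cons, hgb]
      exact (Multiset.cons_inj_right _).mp this
    obtain ⟨e', he1, he2⟩ := ih (B.erase b) h'
    refine ⟨Function.update e' a b, ?_, ?_⟩
    · rw [Finset.cons_val, Multiset.map_cons, Function.update_self, hBv]
      congr 1
      rw [← he1]
      exact Multiset.map_congr rfl fun x hx =>
        Function.update_of_ne (by rintro rfl; exact ha hx) _ _
    · intro x hx
      rcases Finset.mem_cons.mp hx with rfl | hx'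
      · rw [Function.update_self, hgb]
      · rw [Function.update_of_ne (by rintro rfl; exact ha hx') _ _]
        exact he2 x hx'

lemma mrg_le (s t : Finset ℕ) (x : ℕ) : mrg s t x ≤ x := Nat.sub_le _ _

lemma gcard_lt {t : Finset ℕ} {e e' : ℕ} (he' : e' ∈ t) (h : e < e') :
    (t.filter (· ≤ e)).card < (t.filter (· ≤ e')).card := by
  apply Finset.card_lt_card
  constructor
  · intro x hx
    rw [Finset.mem_filter] at hx ⊢
    exact ⟨hx.1, by have := hx.2; (try simp only [decide_eq_true_eq] at *); omega⟩
  · intro hsub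
    have := hsub (Finset.mem_filter.mpr ⟨he', by simp⟩)
    have := (Finset.mem_filter.mp this).2
    try simp only [decide_eq_true_eq] at this
    omega

lemma gcard_injOn {t : Finset ℕ} {e e' : ℕ} (he : e ∈ t) (he' : e' ∈ t)
    (h : (t.filter (· ≤ e)).card = (t.filter (· ≤ e')).card) : e = e' := by
  rcases lt_trichotomy e e' with hlt | heq | hgt
  · exact absurd h (by have := gcard_lt he' hlt; omega)
  · exact heq
  · exact absurd h (by have := gcard_lt he hgt; omega)

lemma mrg_spc {s t : Finset ℕ} (hst : s ⊆ t) (u : ℕ) : mrg s t (spc t u) = spc s u := by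
  unfold mrg spc
  have hfe : ((t \ s).filter (fun e => (t.filter (· ≤ e)).card < 1 + (t.filter (· < u)).card))
      = (t \ s).filter (· < u) := by
    apply Finset.filter_congr
    intro e he
    have het : e ∈ t := (Finset.mem_sdiff.mp he).1
    try simp only [decide_eq_true_eq]
    constructor
    · intro hlt
      by_contra hnot
      push_neg at hnot
      have hcc : (t.filter (· < u)).card < (t.filter (· ≤ e)).card := by
        apply Finset.card_lt_card
        constructor
        · intro x hx
          rw [Finset.mem_filter] at hx ⊢
          refine ⟨hx.1, ?_⟩
          have := hx.2; (try simp only [decide_eq_true_eq] at this ⊢); omega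
        · intro hsub
          have := hsub (Finset.mem_filter.mpr ⟨het, by simp⟩)
          have := (Finset.mem_filter.mp this).2
          try simp only [decide_eq_true_eq] at this
          omega
      omega
    · intro hlt
      have hcc : (t.filter (· ≤ e)).card ≤ (t.filter (· < u)).card := by
        apply Finset.card_le_card
        intro x hx
        rw [Finset.mem_filter] at hx ⊢
        refine ⟨hx.1, ?_⟩
        have := hx.2; (try simp only [decide_eq_true_eq] at this ⊢); omega
      omega
  rw [hfe]
  have hsplit : (t.filter (· < u)).card
      = (s.filter (· < u)).card + ((t \ s).filter (· < u)).card := by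
    rw [← Finset.card_union_of_disjoint, ← Finset.filter_union,
      Finset.union_sdiff_of_subset hst]
    exact Finset.disjoint_filter_filter (Finset.disjoint_sdiff)
  omega

lemma Fcard_le {s t : Finset ℕ} (z : ℕ) :
    ((t \ s).filter (fun e => (t.filter (· ≤ e)).card < z)).card ≤ z := by
  have hmem : ∀ e ∈ (t \ s).filter (fun e => (t.filter (· ≤ e)).card < z),
      (t.filter (· ≤ e)).card ∈ Finset.range z := by
    intro e he; simpa using (Finset.mem_filter.mp he).2
  have hinj : ∀ e ∈ (t \ s).filter (fun e => (t.filter (· ≤ e)).card < z),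
      ∀ e' ∈ (t \ s).filter (fun e => (t.filter (· ≤ e)).card < z),
      (t.filter (· ≤ e)).card = (t.filter (· ≤ e')).card → e = e' := by
    intro e he e' he' hh
    exact gcard_injOn ((Finset.mem_sdiff.mp (Finset.mem_filter.mp he).1).1)
      ((Finset.mem_sdiff.mp (Finset.mem_filter.mp he').1).1) hh
  simpa using Finset.card_le_card_of_injOn _ hmem hinj

lemma mrg_mono {s t : Finset ℕ} {x y : ℕ} (hxy : x ≤ y) : mrg s t x ≤ mrg s t y := by
  unfold mrg
  have hsub : (t \ s).filter (fun e => (t.filter (· ≤ e)).card < x)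
      ⊆ (t \ s).filter (fun e => (t.filter (· ≤ e)).card < y) := by
    intro e he
    rw [Finset.mem_filter] at he ⊢
    exact ⟨he.1, by omega⟩
  have h1 := Finset.card_sdiff_add_card_eq_card hsub
  have h2 : (((t \ s).filter (fun e => (t.filter (· ≤ e)).card < y)) \
      ((t \ s).filter (fun e => (t.filter (· ≤ e)).card < x))).card ≤ y - x := by
    have hmem : ∀ e ∈ ((t \ s).filter (fun e => (t.filter (· ≤ e)).card < y)) \
        ((t \ s).filter (fun e => (t.filter (· ≤ e)).card < x)),
        (t.filter (· ≤ e)).card ∈ Finset.Ico x y := by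
      intro e he
      obtain ⟨h1', h2'⟩ := Finset.mem_sdiff.mp he
      rw [Finset.mem_filter] at h1'
      rw [Finset.mem_Ico]
      refine ⟨?_, h1'.2⟩
      by_contra hc; push_neg at hc
      exact h2' (Finset.mem_filter.mpr ⟨h1'.1, hc⟩)
    have hinj : ∀ e ∈ ((t \ s).filter (fun e => (t.filter (· ≤ e)).card < y)) \
        ((t \ s).filter (fun e => (t.filter (· ≤ e)).card < x)),
        ∀ e' ∈ ((t \ s).filter (fun e => (t.filter (· ≤ e)).card < y)) \
        ((t \ s).filter (fun e => (t.filter (· ≤ e)).card < x)),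
        (t.filter (· ≤ e)).card = (t.filter (· ≤ e')).card → e = e' := by
      intro e he e' he' hh
      have a1 := Finset.mem_filter.mp (Finset.mem_sdiff.mp he).1
      have a2 := Finset.mem_filter.mp (Finset.mem_sdiff.mp he').1
      exact gcard_injOn (Finset.mem_sdiff.mp a1.1).1 (Finset.mem_sdiff.mp a2.1).1 hh
    simpa [Nat.card_Ico] using Finset.card_le_card_of_injOn _ hmem hinj
  have h3 := Fcard_le (s := s) (t := t) x
  omega

open Polynomial in
lemma my_charpoly_conj {n : Type*} [DecidableEq n] [Fintype n] (P M Q : Matrix n n ℝ)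
    (hPQ : P * Q = 1) : (P * M * Q).charpoly = M.charpoly := by
  unfold Matrix.charpoly
  have hs : Matrix.scalar n (X : ℝ[X]) = (X : ℝ[X]) • (1 : Matrix n n ℝ[X]) := by
    simp [Matrix.smul_eq_diagonal_mul]
  have hc : Matrix.charmatrix (P * M * Q) =
      (C : ℝ →+* ℝ[X]).mapMatrix P * Matrix.charmatrix M * (C : ℝ →+* ℝ[X]).mapMatrix Q := by
    unfold Matrix.charmatrix
    rw [mul_sub, sub_mul, hs]
    congr 1
    · rw [Matrix.mul_smul, Matrix.smul_mul, mul_one, ← _root_.map_mul, hPQ, _root_.map_one]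
    · simp [_root_.map_mul]
  rw [hc, Matrix.det_mul, Matrix.det_mul, ← RingHom.map_det, ← RingHom.map_det]
  have h1 : P.det * Q.det = 1 := by rw [← Matrix.det_mul, hPQ, Matrix.det_one]
  calc Polynomial.C P.det * (Matrix.charmatrix M).det * Polynomial.C Q.det
      = Polynomial.C (P.det * Q.det) * (Matrix.charmatrix M).det := by
        rw [Polynomial.C_mul]; ring
    _ = (Matrix.charmatrix M).det := by rw [h1]; simp


section SectorLemmas

variable {L : ℕ} {s t : Finset ℕ}

lemma theta_mrg_eq (p q : ℝ) {a b : ℕ} (h : mrg s t a ≠ mrg s t b) :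
    theta p q ((a : ℤ) - (b : ℤ)) = theta p q ((mrg s t a : ℤ) - (mrg s t b : ℤ)) := by
  rcases lt_trichotomy a b with hab | rfl | hab
  · have h1 : mrg s t a ≤ mrg s t b := mrg_mono hab.le
    have h2 : mrg s t a < mrg s t b := lt_of_le_of_ne h1 h
    unfold theta
    rw [if_neg (by omega), if_pos (by omega), if_neg (by omega), if_pos (by omega)]
  · exact absurd rfl h
  · have h1 : mrg s t b ≤ mrg s t a := mrg_mono hab.le
    have h2 : mrg s t b < mrg s t a := lt_of_le_of_ne h1 (Ne.symm h)
    unfold theta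
    rw [if_pos (by omega), if_pos (by omega)]

/-- The merging map on configurations. -/
def phiFun (s t : Finset ℕ) {L : ℕ} (k : Fin L → Fin (L + 1)) : Fin L → Fin (L + 1) :=
  fun j => ⟨mrg s t (k j), lt_of_le_of_lt (mrg_le s t _) (k j).isLt⟩

lemma phiFun_swapAt (k : Fin L → Fin (L + 1)) (i : Fin L) :
    phiFun s t (swapAt k i) = swapAt (phiFun s t k) i := by
  funext j
  unfold phiFun swapAt
  split_ifs <;> rfl

lemma swapAt_eq_self {N : ℕ} {k : Fin L → Fin N} {i : Fin L}
    (h : k i = k (cycSucc i)) : swapAt k i = k := by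
  funext j
  unfold swapAt
  split_ifs with h1 h2
  · rw [h1, ← h]
  · rw [h2, h]
  · rfl

lemma swapAt_eq_comp (k : Fin L → Fin (L + 1)) (i : Fin L) :
    swapAt k i = k ∘ (Equiv.swap i (cycSucc i)) := by
  funext j
  simp only [swapAt, Function.comp_apply, Equiv.swap_apply_def]
  split_ifs <;> rfl

lemma inSector_swapAt {k : Fin L → Fin (L + 1)} (hk : inSector L t k) (i : Fin L) :
    inSector L t (swapAt k i) := by
  unfold inSector at hk ⊢
  rw [swapAt_eq_comp]
  have huniv : Finset.univ.val.map (Equiv.swap i (cycSucc i)) = Finset.univ.val := by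
    have := congrArg Finset.val (Finset.map_univ_equiv (Equiv.swap i (cycSucc i)))
    simpa [Finset.map] using this
  calc Multiset.map (fun j => ((k ((Equiv.swap i (cycSucc i)) j) : ℕ))) Finset.univ.val
      = Multiset.map (fun j => ((k j : ℕ))) (Finset.univ.val.map (Equiv.swap i (cycSucc i))) := by
        rw [Multiset.map_map]; rfl
    _ = Multiset.map (spc t) (Finset.Icc 1 L).val := by rw [huniv]; exact hk

lemma inSector_phiFun (hst : s ⊆ t) {k : Fin L → Fin (L + 1)} (hk : inSector L t k) :
    inSector L s (phiFun s t k) := by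
  unfold inSector at hk ⊢
  have h1 : (fun j => ((phiFun s t k j : ℕ))) = fun j => mrg s t (k j) := rfl
  rw [h1]
  calc Multiset.map (fun j => mrg s t ((k j : ℕ))) Finset.univ.val
      = Multiset.map (mrg s t) (Multiset.map (fun j => ((k j : ℕ))) Finset.univ.val) := by
        rw [Multiset.map_map]; rfl
    _ = Multiset.map (mrg s t) (Multiset.map (spc t) (Finset.Icc 1 L).val) := by rw [hk]
    _ = Multiset.map (spc s) (Finset.Icc 1 L).val := by
        rw [Multiset.map_map]
        exact Multiset.map_congr rfl (fun u _ => mrg_spc hst u)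

lemma phiFun_surj (hst : s ⊆ t) (ht : t ⊆ Finset.Ioo 0 L) {c : Fin L → Fin (L + 1)}
    (hc : inSector L s c) :
    ∃ k : Fin L → Fin (L + 1), inSector L t k ∧ phiFun s t k = c := by
  obtain ⟨e, he1, he2⟩ := exists_map_eq Finset.univ (Finset.Icc 1 L)
    (fun j => ((c j : ℕ))) (spc s) hc
  have hmem : ∀ j : Fin L, e j ∈ Finset.Icc 1 L := by
    intro j
    have : e j ∈ Finset.univ.val.map e := Multiset.mem_map_of_mem e (by simp)
    rw [he1] at this
    exact this
  have hL : ∀ j : Fin L, 1 ≤ L := fun j => by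
    have := Finset.mem_Icc.mp (hmem j); omega
  have hbound : ∀ j : Fin L, spc t (e j) < L + 1 := by
    intro j
    have h1 : (t.filter (· < e j)).card ≤ t.card := Finset.card_le_card (Finset.filter_subset _ _)
    have h2 : t.card ≤ (Finset.Ioo 0 L).card := Finset.card_le_card ht
    have h3 : (Finset.Ioo 0 L).card = L - 1 := by rw [Nat.card_Ioo]; omega
    have h4 := hL j
    unfold spc
    omega
  refine ⟨fun j => ⟨spc t (e j), hbound j⟩, ?_, ?_⟩
  · unfold inSector
    calc Multiset.map (fun j => spc t (e j)) Finset.univ.val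
        = Multiset.map (spc t) (Finset.univ.val.map e) := by rw [Multiset.map_map]; rfl
      _ = Multiset.map (spc t) (Finset.Icc 1 L).val := by rw [he1]
  · funext j
    apply Fin.ext
    show mrg s t (spc t (e j)) = (c j : ℕ)
    rw [mrg_spc hst, ← he2 j (Finset.mem_univ j)]

end SectorLemmas

section Core

variable (p q : ℝ) (L : ℕ) (s t : Finset ℕ)

/-- The merging map on sector elements. -/
noncomputable def phiSec (hst : s ⊆ t) : Sector L t → Sector L s :=
  fun k => ⟨phiFun s t k.1, inSector_phiFun hst k.2⟩

lemma core_intertwine (hst : s ⊆ t) (a : Sector L s) (k : Sector L t) :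
    (∑ m : Sector L t, (if a = phiSec L s t hst m then (1:ℝ) else 0) * HSec p q L t m k)
      = HSec p q L s a (phiSec L s t hst k) := by
  unfold HSec
  simp_rw [Finset.mul_sum]
  rw [Finset.sum_comm]
  apply Finset.sum_congr rfl
  intro i _
  have e1 : ∀ (w : Fin L → Fin (L + 1)) (hw : inSector L t w),
      (∑ m : Sector L t, (if a = phiSec L s t hst m then (1:ℝ) else 0) *
        (if m.1 = w then (1:ℝ) else 0))
      = (if a = phiSec L s t hst ⟨w, hw⟩ then (1:ℝ) else 0) := by
    intro w hw
    rw [Finset.sum_eq_single (⟨w, hw⟩ : Sector L t)]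
    · simp
    · intro m _ hm
      have : m.1 ≠ w := fun h => hm (Subtype.ext h)
      simp [this]
    · simp
  have hswap : inSector L t (swapAt k.1 i) := inSector_swapAt k.2 i
  have hsum : (∑ m : Sector L t, (if a = phiSec L s t hst m then (1:ℝ) else 0) *
      (theta p q ((k.1 i : ℤ) - (k.1 (cycSucc i) : ℤ)) *
        ((if m.1 = swapAt k.1 i then (1:ℝ) else 0) - (if m.1 = k.1 then 1 else 0))))
      = theta p q ((k.1 i : ℤ) - (k.1 (cycSucc i) : ℤ)) *
        ((if a = phiSec L s t hst ⟨swapAt k.1 i, hswap⟩ then (1:ℝ) else 0)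
          - (if a = phiSec L s t hst k then 1 else 0)) := by
    simp_rw [mul_left_comm _ (theta p q ((k.1 i : ℤ) - (k.1 (cycSucc i) : ℤ))), ← Finset.mul_sum]
    congr 1
    simp_rw [mul_sub]
    rw [Finset.sum_sub_distrib, e1 (swapAt k.1 i) hswap, e1 k.1 k.2]
  rw [hsum]
  -- now compare with the RHS term
  have hval : ∀ j : Fin L, ((phiSec L s t hst k).1 j : ℕ) = mrg s t (k.1 j) := fun j => rfl
  have hphi : (phiSec L s t hst ⟨swapAt k.1 i, hswap⟩).1 = swapAt (phiSec L s t hst k).1 i := by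
    show phiFun s t (swapAt k.1 i) = _
    exact phiFun_swapAt k.1 i
  have hite1 : (if a = phiSec L s t hst ⟨swapAt k.1 i, hswap⟩ then (1:ℝ) else 0)
      = (if a.1 = swapAt (phiSec L s t hst k).1 i then (1:ℝ) else 0) := by
    congr 1
    rw [Subtype.ext_iff, hphi]
  have hite2 : (if a = phiSec L s t hst k then (1:ℝ) else 0)
      = (if a.1 = (phiSec L s t hst k).1 then (1:ℝ) else 0) := by
    congr 1
    rw [Subtype.ext_iff]
  rw [hite1, hite2]
  by_cases hm : mrg s t (k.1 i) = mrg s t (k.1 (cycSucc i))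
  · have heq : (phiSec L s t hst k).1 i = (phiSec L s t hst k).1 (cycSucc i) :=
      Fin.ext (by rw [hval, hval]; exact hm)
    rw [swapAt_eq_self heq]
    ring
  · have hth : theta p q ((k.1 i : ℤ) - (k.1 (cycSucc i) : ℤ))
        = theta p q (((phiSec L s t hst k).1 i : ℕ) - (((phiSec L s t hst k).1 (cycSucc i) : ℕ) : ℤ)) := by
      rw [hval, hval]
      exact theta_mrg_eq p q hm
    rw [← hth]

end Core
/-- Spectral inclusion: for sectors `s ⊆ t ⊆ {1,…,L−1}`, the characteristic
polynomial of `H_s` divides that of `H_t`; in particular every eigenvalue of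
`H_s`, with multiplicity, is an eigenvalue of `H_t`. -/
theorem spectral_inclusion (p q : ℝ) (hp : 0 ≤ p) (hq : 0 ≤ q) (L : ℕ)
    (s t : Finset ℕ) (hst : s ⊆ t) (ht : t ⊆ Finset.Ioo 0 L) :
    (HSec p q L s).charpoly ∣ (HSec p q L t).charpoly := by
  classical
  set A := HSec p q L s with hA
  set B := HSec p q L t with hB
  set φ := phiSec L s t hst with hφ
  have hsurj : Function.Surjective φ := by
    intro c
    obtain ⟨k, hk, hpk⟩ := phiFun_surj hst ht c.2
    exact ⟨⟨k, hk⟩, Subtype.ext hpk⟩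
  set σ := Function.surjInv hsurj with hσdef
  have hσ : ∀ a, φ (σ a) = a := Function.surjInv_eq hsurj
  have hinj : Function.Injective σ := Function.injective_surjInv hsurj
  let γ := {x : Sector L t // x ∉ Set.range σ}
  let eqv : (Sector L s ⊕ γ) ≃ Sector L t :=
    (Equiv.sumCongr (Equiv.ofInjective σ hinj) (Equiv.refl γ)).trans
      (Equiv.sumCompl (· ∈ Set.range σ))
  have heqv1 : ∀ a, eqv (Sum.inl a) = σ a := fun a => rfl
  have heqv2 : ∀ c : γ, eqv (Sum.inr c) = c.1 := fun c => rfl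
  set B' := Matrix.reindex eqv.symm eqv.symm B with hB'def
  have hcharB : B'.charpoly = B.charpoly := Matrix.charpoly_reindex eqv.symm B
  have hB'app : ∀ x y, B' x y = B (eqv x) (eqv y) := by
    intro x y
    simp [hB'def, Matrix.reindex_apply, Matrix.submatrix_apply]
  set B11 : Matrix (Sector L s) (Sector L s) ℝ := fun a a' => B (σ a) (σ a') with hB11
  set B12 : Matrix (Sector L s) γ ℝ := fun a c => B (σ a) c.1 with hB12
  set B21 : Matrix γ (Sector L s) ℝ := fun c a => B c.1 (σ a) with hB21
  set B22 : Matrix γ γ ℝ := fun c c' => B c.1 c'.1 with hB22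
  set U : Matrix (Sector L s) γ ℝ := fun a c => if a = φ c.1 then 1 else 0 with hU
  have hB'blocks : B' = Matrix.fromBlocks B11 B12 B21 B22 := by
    ext x y
    cases x with
    | inl a => cases y with
      | inl a' => rw [hB'app, heqv1, heqv1]; rfl
      | inr c' => rw [hB'app, heqv1, heqv2]; rfl
    | inr c => cases y with
      | inl a' => rw [hB'app, heqv2, heqv1]; rfl
      | inr c' => rw [hB'app, heqv2, heqv2]; rfl
  -- key identity from the intertwining relation
  have key : ∀ (a : Sector L s) (k : Sector L t),
      B (σ a) k + ∑ c : γ, U a c * B c.1 k = A a (φ k) := by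
    intro a k
    calc B (σ a) k + ∑ c : γ, U a c * B c.1 k
        = ∑ m : Sector L t, (if a = φ m then (1:ℝ) else 0) * B m k := by
          rw [← Equiv.sum_comp eqv (fun m => (if a = φ m then (1:ℝ) else 0) * B m k),
            Fintype.sum_sum_type]
          congr 1
          · have hterm : ∀ a' : Sector L s,
                (if a = φ (eqv (Sum.inl a')) then (1:ℝ) else 0) * B (eqv (Sum.inl a')) k
                = (if a' = a then B (σ a') k else 0) := by
              intro a'
              rw [heqv1, hσ]
              by_cases h : a = a'
              · subst h; simp
              · simp [h, Ne.symm h]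
            rw [Finset.sum_congr rfl (fun a' _ => hterm a'), Finset.sum_ite_eq' Finset.univ a
              (fun a' => B (σ a') k)]
            simp
      _ = A a (φ k) := core_intertwine p q L s t hst a k
  have h_i : B11 + U * B21 = A := by
    ext a a'
    have := key a (σ a')
    rw [hσ] at this
    exact this
  have h_ii : B12 + U * B22 = A * U := by
    ext a c
    have := key a c.1
    have hrhs : (A * U) a c = A a (φ c.1) := by
      rw [Matrix.mul_apply]
      simp only [hU, mul_ite, mul_one, mul_zero]
      rw [Finset.sum_ite_eq' Finset.univ (φ c.1) (fun a' => A a a')]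
      simp
    rw [hrhs, ← this]
    rfl
  set P : Matrix (Sector L s ⊕ γ) (Sector L s ⊕ γ) ℝ := Matrix.fromBlocks 1 U 0 1 with hP
  set Q : Matrix (Sector L s ⊕ γ) (Sector L s ⊕ γ) ℝ := Matrix.fromBlocks 1 (-U) 0 1 with hQ
  have hPQ : P * Q = 1 := by
    rw [hP, hQ, Matrix.fromBlocks_multiply]
    simp [← Matrix.fromBlocks_one]
  have hM' : P * B' * Q = Matrix.fromBlocks A 0 B21 (B22 - B21 * U) := by
    rw [hB'blocks, hP, hQ, Matrix.fromBlocks_multiply, Matrix.fromBlocks_multiply]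
    simp only [Matrix.one_mul, Matrix.mul_one, Matrix.zero_mul, Matrix.mul_zero,
      add_zero, zero_add, Matrix.mul_neg]
    rw [h_i, h_ii]
    rw [neg_add_cancel, neg_add_eq_sub]
  have hchain : B.charpoly = A.charpoly * (B22 - B21 * U).charpoly := by
    rw [← hcharB, ← my_charpoly_conj P B' Q hPQ, hM', Matrix.charpoly_fromBlocks_zero₁₂]
  exact ⟨(B22 - B21 * U).charpoly, hchain⟩
end

section
/- Spectrum reversal in the maximal sector: let H act on the free vector space over the set of permutations (k₁,…,k_L) of (1,…,L) by (H f)(k) = ∑_{i∈ℤ_L} Θ(k_i − k_{i+1})(f(k^{(i)}) − f(k)), where k^{(i)} swaps k_i and k_{i+1} cyclically and Θ(x)=p for x>0, q for x<0. If f satisfies (H^T f)(k) = E f(k) for all k (i.e. f is a left eigenvector with eigenvalue E), then the function ψ(k₁,…,k_L) := sgn(k₁,…,k_L) · f(k_L,…,k₁) is a right eigenvector of H with eigenvalue −L(p+q) − E. -/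
/-- The configuration (in the maximal sector of permutations of `(1,…,L)`)
obtained from `k` by interchanging the local states at sites `i` and `i+1`. -/
def swapK {L : ℕ} (k : Equiv.Perm (Fin L)) (i : Fin L) : Equiv.Perm (Fin L) :=
  (Equiv.swap i (cycSucc i)).trans k

/-- The multi-species ASEP Hamiltonian on the maximal sector, as a matrix:
`H|k⟩ = ∑_{i∈ℤ_L} Θ(k_i−k_{i+1}) (|k^{(i)}⟩ − |k⟩)`. -/
noncomputable def HmatMax (p q : ℝ) (L : ℕ) :
    Matrix (Equiv.Perm (Fin L)) (Equiv.Perm (Fin L)) ℝ :=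
  fun c k => ∑ i : Fin L, theta p q ((k i : ℤ) - (k (cycSucc i) : ℤ)) *
    ((if c = swapK k i then 1 else 0) - (if c = k then 1 else 0))

lemma theta_add_theta_neg (p q : ℝ) {x : ℤ} (hx : x ≠ 0) :
    theta p q x + theta p q (-x) = p + q := by
  unfold theta
  split_ifs <;> (first | ring1 | (exfalso; omega))

lemma cycSucc_ne {L : ℕ} (hL : 2 ≤ L) (i : Fin L) : cycSucc i ≠ i := by
  have hi := i.isLt
  simp only [cycSucc, Ne, Fin.ext_iff]
  rcases Nat.lt_or_ge (i.val + 1) L with h | h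
  · rw [Nat.mod_eq_of_lt h]; omega
  · have h2 : i.val + 1 = L := by omega
    rw [h2, Nat.mod_self]; omega

lemma cycSucc_rev {L : ℕ} (i : Fin L) : cycSucc (Fin.rev (cycSucc i)) = Fin.rev i := by
  have hi := i.isLt
  apply Fin.ext
  simp only [cycSucc, Fin.val_rev]
  rcases Nat.lt_or_ge (i.val + 1) L with h | h
  · rw [Nat.mod_eq_of_lt h]
    have h2 : L - (i.val + 1 + 1) + 1 = L - (i.val + 1) := by omega
    rw [h2, Nat.mod_eq_of_lt (by omega)]
  · have h2 : i.val + 1 = L := by omega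
    rw [h2, Nat.mod_self]
    have h3 : L - (0 + 1) + 1 = L := by omega
    rw [h3, Nat.mod_self]
    omega

lemma swapK_swapK {L : ℕ} (k : Equiv.Perm (Fin L)) (i : Fin L) : swapK (swapK k i) i = k := by
  simp [swapK, ← Equiv.trans_assoc]

lemma rev_swap {L : ℕ} (a b x : Fin L) :
    Fin.rev (Equiv.swap a b x) = Equiv.swap (Fin.rev a) (Fin.rev b) (Fin.rev x) := by
  rcases eq_or_ne x a with rfl | ha
  · simp
  rcases eq_or_ne x b with rfl | hb
  · simp
  · rw [Equiv.swap_apply_of_ne_of_ne ha hb,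
      Equiv.swap_apply_of_ne_of_ne (Fin.rev_injective.ne ha) (Fin.rev_injective.ne hb)]

lemma swapK_apply_self {L : ℕ} (k : Equiv.Perm (Fin L)) (i : Fin L) :
    swapK k i i = k (cycSucc i) := by simp [swapK]

lemma swapK_apply_succ {L : ℕ} (k : Equiv.Perm (Fin L)) (i : Fin L) :
    swapK k i (cycSucc i) = k i := by simp [swapK]

/-- Spectrum reversal in the maximal sector: if `f` is a left eigenvector of `H`
with eigenvalue `E`, then `ψ(k₁,…,k_L) = sgn(k) · f(k_L,…,k₁)` is a right
eigenvector of `H` with eigenvalue `−L(p+q) − E`. -/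
theorem spectrum_reversal (p q E : ℝ) (L : ℕ) (hL : 2 ≤ L)
    (f : Equiv.Perm (Fin L) → ℝ)
    (hf : ∀ k : Equiv.Perm (Fin L),
      ∑ i : Fin L, theta p q ((k i : ℤ) - (k (cycSucc i) : ℤ)) * (f (swapK k i) - f k)
        = E * f k) :
    ∀ c : Equiv.Perm (Fin L),
      ∑ k : Equiv.Perm (Fin L),
          HmatMax p q L c k * (((Equiv.Perm.sign k : ℤ) : ℝ) * f (Fin.revPerm.trans k))
        = (-(L : ℝ) * (p + q) - E)
            * (((Equiv.Perm.sign c : ℤ) : ℝ) * f (Fin.revPerm.trans c)) := by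
  intro c
  set ψ : Equiv.Perm (Fin L) → ℝ :=
    fun k => ((Equiv.Perm.sign k : ℤ) : ℝ) * f (Fin.revPerm.trans k) with hψ
  set g : Equiv.Perm (Fin L) := Fin.revPerm.trans c with hg
  set s : ℝ := ((Equiv.Perm.sign c : ℤ) : ℝ) with hs
  -- Step A : collapse the k-sum
  have hcond : ∀ (k : Equiv.Perm (Fin L)) (i : Fin L), (c = swapK k i) ↔ (swapK c i = k) := by
    intro k i
    constructor
    · rintro rfl; exact swapK_swapK k i
    · rintro rfl; exact (swapK_swapK c i).symm
  have stepA : ∑ k : Equiv.Perm (Fin L), HmatMax p q L c k * ψ k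
      = ∑ i : Fin L,
          (theta p q ((c (cycSucc i) : ℤ) - (c i : ℤ)) * ψ (swapK c i)
            - theta p q ((c i : ℤ) - (c (cycSucc i) : ℤ)) * ψ c) := by
    unfold HmatMax
    simp only [Finset.sum_mul]
    rw [Finset.sum_comm]
    refine Finset.sum_congr rfl fun i _ => ?_
    simp only [hcond, sub_mul, mul_sub, mul_ite, ite_mul, mul_one, mul_zero, one_mul, zero_mul,
      Finset.sum_sub_distrib, Finset.sum_ite_eq, Finset.mem_univ, if_true,
      swapK_apply_self, swapK_apply_succ]
  -- sign of swapK
  have hsign : ∀ i : Fin L, ((Equiv.Perm.sign (swapK c i) : ℤ) : ℝ) = -s := by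
    intro i
    have h1 : swapK c i = c * Equiv.swap i (cycSucc i) := rfl
    rw [h1, Equiv.Perm.sign_mul, Equiv.Perm.sign_swap (Ne.symm (cycSucc_ne hL i))]
    simp [hs]
  -- reversal of swapK
  have hrev : ∀ i : Fin L,
      Fin.revPerm.trans (swapK c i) = swapK g (Fin.rev (cycSucc i)) := by
    intro i
    ext x
    simp only [swapK, Equiv.trans_apply, Fin.revPerm_apply, hg]
    congr 1
    rw [cycSucc_rev, rev_swap, Fin.rev_rev, Fin.rev_rev, Equiv.swap_comm]
  -- the involution used for reindexing
  have hinv : Function.Involutive (fun i : Fin L => Fin.rev (cycSucc i)) := by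
    intro i
    simp only
    rw [cycSucc_rev, Fin.rev_rev]
  -- per-site identity
  set F : Fin L → ℝ := fun j =>
    -s * (theta p q ((g j : ℤ) - (g (cycSucc j) : ℤ)) * (f (swapK g j) - f g))
      - (p + q) * (s * f g) with hF
  have hterm : ∀ i : Fin L,
      theta p q ((c (cycSucc i) : ℤ) - (c i : ℤ)) * ψ (swapK c i)
        - theta p q ((c i : ℤ) - (c (cycSucc i) : ℤ)) * ψ c
      = F (Fin.rev (cycSucc i)) := by
    intro i
    have hj1 : g (Fin.rev (cycSucc i)) = c (cycSucc i) := by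
      simp [hg, Fin.rev_rev]
    have hj2 : g (cycSucc (Fin.rev (cycSucc i))) = c i := by
      rw [cycSucc_rev]; simp [hg, Fin.rev_rev]
    have hne0 : ((g (Fin.rev (cycSucc i)) : ℤ) - (g (cycSucc (Fin.rev (cycSucc i))) : ℤ)) ≠ 0 := by
      intro h
      have hval : ((g (Fin.rev (cycSucc i)) : Fin L) : ℕ) = ((g (cycSucc (Fin.rev (cycSucc i))) : Fin L) : ℕ) := by
        exact_mod_cast sub_eq_zero.mp h
      have : g (Fin.rev (cycSucc i)) = g (cycSucc (Fin.rev (cycSucc i))) := Fin.ext hval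
      have := g.injective this
      exact (cycSucc_ne hL (Fin.rev (cycSucc i))) this.symm
    have hθ2 : theta p q ((c i : ℤ) - (c (cycSucc i) : ℤ))
        = (p + q) - theta p q ((c (cycSucc i) : ℤ) - (c i : ℤ)) := by
      have := theta_add_theta_neg p q (x := ((c (cycSucc i) : ℤ) - (c i : ℤ)))
        (by rw [← hj1, ← hj2]; exact hne0)
      rw [neg_sub] at this
      linarith
    have hψsw : ψ (swapK c i) = -s * f (swapK g (Fin.rev (cycSucc i))) := by
      rw [hψ]
      simp only
      rw [hsign i, hrev i]
    have hψc : ψ c = s * f g := by rw [hψ]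
    rw [hψsw, hψc, hθ2, hF]
    simp only
    rw [hj1, hj2]
    ring
  rw [stepA]
  calc ∑ i : Fin L,
        (theta p q ((c (cycSucc i) : ℤ) - (c i : ℤ)) * ψ (swapK c i)
          - theta p q ((c i : ℤ) - (c (cycSucc i) : ℤ)) * ψ c)
      = ∑ i : Fin L, F (Fin.rev (cycSucc i)) := Finset.sum_congr rfl fun i _ => hterm i
    _ = ∑ j : Fin L, F j := by
        have := Equiv.sum_comp (hinv.toPerm _) F
        simpa [Function.Involutive.coe_toPerm] using this
    _ = (-(L : ℝ) * (p + q) - E) * ψ c := by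
        rw [hF]
        simp only
        rw [Finset.sum_sub_distrib, ← Finset.mul_sum, hf g, Finset.sum_const,
          Finset.card_univ, Fintype.card_fin, nsmul_eq_mul]
        have hψc : ψ c = s * f g := by rw [hψ]
        rw [hψc]
        ring
end
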